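/- Let m be a positive integer and let x be a real number with −π/2 < x < π/2. Then ∑_{n=1}^∞ (-1)^{n-1} cos((2n-1)x)/(2n-1)^{2m} = ((-1)^{m-1} (2π)^{2m-1}/(2·(2m-1)!)) · ( ζ'(1-2m, 1/4 − x/(2π)) − ζ'(1-2m, 3/4 − x/(2π)) + ζ'(1-2m, 1/4 + x/(2π)) − ζ'(1-2m, 3/4 + x/(2π)) ). -/

import Mathlib

open Filter Topology Finset Real

noncomputable def hzeta (s : ℂ) (a : ℝ) : ℂ :=
  HurwitzZeta.hurwitzZeta (a : UnitAddCircle) s -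
    ∑ j ∈ Finset.range (⌈a⌉₊ - 1), ((a : ℂ) - ((⌈a⌉₊ : ℂ) - 1) + j) ^ (-s)

namespace AltOddCos

open HurwitzZeta

noncomputable def hfun : ℂ → ℂ := fun s => (2 * (π:ℂ)) ^ (-s) * Complex.Gamma s

lemma hzeta_eq {a : ℝ} (h0 : 0 < a) (h1 : a ≤ 1) :
    (fun s => hzeta s a) = HurwitzZeta.hurwitzZeta (a : UnitAddCircle) := by
  funext s
  rw [hzeta, show ⌈a⌉₊ = 1 from (Nat.ceil_eq_iff one_ne_zero).mpr (by simpa using ⟨h0, h1⟩)]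
  simp

lemma coe_ne_zero {a : ℝ} (h0 : 0 < a) (h1 : a < 1) : (a : UnitAddCircle) ≠ 0 := by
  rw [Ne, AddCircle.coe_eq_zero_iff]
  rintro ⟨n, hn⟩
  simp only [zsmul_eq_mul, mul_one] at hn
  rcases lt_trichotomy n 0 with h | rfl | h
  · have hn1 : n ≤ -1 := by omega
    have : (n:ℝ) ≤ -1 := by exact_mod_cast hn1
    linarith [hn]
  · simp at hn; linarith
  · have : (1:ℝ) ≤ n := by exact_mod_cast h
    linarith [hn]

lemma coe_neg_eq {a b : ℝ} (hab : a + b = 1) :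
    -((a : ℝ) : UnitAddCircle) = ((b : ℝ) : UnitAddCircle) := by
  have : ((b : ℝ) : UnitAddCircle) = ((-a + 1 : ℝ) : UnitAddCircle) := by
    norm_num [show b = -a + 1 by linarith]
  rw [this, AddCircle.coe_add_period]
  rfl

lemma exp_neg_pi_I_mul (m : ℕ) : Complex.exp (-(π:ℂ) * Complex.I * (2 * m) / 2) = (-1)^m := by
  rw [show (-(π:ℂ) * Complex.I * (2 * m) / 2) = (m:ℂ) * (-((π:ℂ) * Complex.I)) by ring,
    Complex.exp_nat_mul, Complex.exp_neg, Complex.exp_pi_mul_I]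
  simp [inv_neg]

lemma exp_pos_pi_I_mul (m : ℕ) : Complex.exp ((π:ℂ) * Complex.I * (2 * m) / 2) = (-1)^m := by
  rw [show ((π:ℂ) * Complex.I * (2 * m) / 2) = (m:ℂ) * ((π:ℂ) * Complex.I) by ring,
    Complex.exp_nat_mul, Complex.exp_pi_mul_I]

lemma Dval (a : UnitAddCircle) (ha : a ≠ 0) (m : ℕ) (hm : 0 < m) :
    deriv (hurwitzZeta a) (1 - 2 * (m:ℂ)) =
      -(deriv hfun (2 * (m:ℂ)) * ((-1)^m * expZeta a (2*(m:ℂ)) + (-1)^m * expZeta (-a) (2*(m:ℂ)))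
        + hfun (2 * (m:ℂ)) *
          ((((-1):ℂ)^m * (-(π:ℂ) * Complex.I / 2)) * expZeta a (2*(m:ℂ))
            + (((-1):ℂ)^m * ((π:ℂ) * Complex.I / 2)) * expZeta (-a) (2*(m:ℂ))
            + ((-1):ℂ)^m * deriv (expZeta a) (2*(m:ℂ)) + ((-1):ℂ)^m * deriv (expZeta (-a)) (2*(m:ℂ)))) := by
  set s0 : ℂ := 2 * (m:ℂ) with hs0
  have hs0re : s0.re = 2 * m := by simp [hs0]
  have hev : (fun w => hurwitzZeta a w) =ᶠ[𝓝 (1 - s0)]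
      (fun w => hfun (1 - w) * (Complex.exp (-(π:ℂ) * Complex.I * (1 - w) / 2) * expZeta a (1 - w)
        + Complex.exp ((π:ℂ) * Complex.I * (1 - w) / 2) * expZeta (-a) (1 - w))) := by
    have hlt : ∀ᶠ w : ℂ in 𝓝 (1 - s0), w.re < 1 := by
      apply ContinuousAt.eventually_lt Complex.continuous_re.continuousAt continuousAt_const
      have : (0:ℝ) < 2 * m := by positivity
      simp [hs0re, Complex.sub_re]
      linarith
    filter_upwards [hlt] with w hw
    have h1 : ∀ n : ℕ, (1 - w) ≠ -(n:ℂ) := by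
      intro n h
      have := congrArg Complex.re h
      simp [Complex.sub_re] at this
      have h2 : (0:ℝ) ≤ n := n.cast_nonneg
      linarith
    have := hurwitzZeta_one_sub a h1 (Or.inl ha) (s := 1 - w)
    rw [sub_sub_cancel] at this
    rw [this, hfun]
  rw [hev.deriv_eq]
  have hds : deriv (fun w => hfun (1 - w) * (Complex.exp (-(π:ℂ) * Complex.I * (1 - w) / 2) * expZeta a (1 - w)
        + Complex.exp ((π:ℂ) * Complex.I * (1 - w) / 2) * expZeta (-a) (1 - w))) (1 - s0)
      = -deriv (fun s => hfun s * (Complex.exp (-(π:ℂ) * Complex.I * s / 2) * expZeta a s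
        + Complex.exp ((π:ℂ) * Complex.I * s / 2) * expZeta (-a) s)) (1 - (1 - s0)) :=
    deriv_comp_const_sub (fun s : ℂ => hfun s * (Complex.exp (-(π:ℂ) * Complex.I * s / 2) * expZeta a s
        + Complex.exp ((π:ℂ) * Complex.I * s / 2) * expZeta (-a) s)) 1 (1 - s0)
  rw [hds, sub_sub_cancel]
  have hne : ∀ n : ℕ, s0 ≠ -(n:ℂ) := by
    intro n h
    have := congrArg Complex.re h
    simp [hs0re] at this
    have h2 : (0:ℝ) ≤ n := n.cast_nonneg
    have h3 : (0:ℝ) < 2 * m := by positivity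
    linarith
  have hΓ : DifferentiableAt ℂ Complex.Gamma s0 := Complex.differentiableAt_Gamma s0 hne
  have h2pi : (2 * (π:ℂ)) ≠ 0 := by
    simp [Complex.ofReal_ne_zero, Real.pi_ne_zero]
  have hpow : DifferentiableAt ℂ (fun s : ℂ => (2 * (π:ℂ)) ^ (-s)) s0 :=
    (differentiableAt_id.neg).const_cpow (Or.inl h2pi)
  have hh : HasDerivAt hfun (deriv hfun s0) s0 := (hpow.mul hΓ).hasDerivAt
  have ha' : -a ≠ 0 := neg_ne_zero.mpr ha
  have hu : HasDerivAt (expZeta a) (deriv (expZeta a) s0) s0 :=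
    (differentiableAt_expZeta a s0 (Or.inr ha)).hasDerivAt
  have hv : HasDerivAt (expZeta (-a)) (deriv (expZeta (-a)) s0) s0 :=
    (differentiableAt_expZeta (-a) s0 (Or.inr ha')).hasDerivAt
  have hlin : ∀ c : ℂ, HasDerivAt (fun s : ℂ => c * s / 2) (c / 2) s0 := by
    intro c
    simpa using ((hasDerivAt_id s0).const_mul c).div_const 2
  have hp : HasDerivAt (fun s : ℂ => Complex.exp (-(π:ℂ) * Complex.I * s / 2))
      (Complex.exp (-(π:ℂ) * Complex.I * s0 / 2) * (-(π:ℂ) * Complex.I / 2)) s0 :=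
    (hlin (-(π:ℂ) * Complex.I)).cexp
  have hq : HasDerivAt (fun s : ℂ => Complex.exp ((π:ℂ) * Complex.I * s / 2))
      (Complex.exp ((π:ℂ) * Complex.I * s0 / 2) * ((π:ℂ) * Complex.I / 2)) s0 :=
    (hlin ((π:ℂ) * Complex.I)).cexp
  have hG := hh.mul ((hp.mul hu).add (hq.mul hv))
  erw [hG.deriv]
  simp only [Pi.mul_apply, Pi.add_apply]
  rw [hs0, exp_neg_pi_I_mul, exp_pos_pi_I_mul]
  ring

lemma hassum (m : ℕ) (hm : 0 < m) (x : ℝ) :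
    HasSum (fun n : ℕ => (-1)^n * (Real.cos ((2*(n:ℝ)+1)*x) : ℂ) / (2*(n:ℂ)+1)^(2*m))
      ((sinZeta ((1/4 - x/(2*π) : ℝ) : UnitAddCircle) (2*(m:ℂ))
        + sinZeta ((1/4 + x/(2*π) : ℝ) : UnitAddCircle) (2*(m:ℂ)))/2) := by
  have hre : 1 < (2*(m:ℂ)).re := by
    simp only [Complex.mul_re, Complex.re_ofNat, Complex.natCast_re, Complex.im_ofNat,
      Complex.natCast_im, mul_zero, sub_zero]
    exact_mod_cast by omega
  have h1 := hasSum_nat_sinZeta (1/4 - x/(2*π)) hre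
  have h3 := hasSum_nat_sinZeta (1/4 + x/(2*π)) hre
  have hπ : (π:ℝ) ≠ 0 := Real.pi_ne_zero
  have hF : HasSum (fun n : ℕ => ((2 * Real.sin ((n:ℝ)*π/2) * Real.cos ((n:ℝ)*x) : ℝ) : ℂ)
      / (n:ℂ)^(2*(m:ℂ)))
      (sinZeta ((1/4 - x/(2*π) : ℝ) : UnitAddCircle) (2*(m:ℂ))
        + sinZeta ((1/4 + x/(2*π) : ℝ) : UnitAddCircle) (2*(m:ℂ))) := by
    refine (h1.add h3).congr_fun fun n => ?_
    rw [← add_div, ← Complex.ofReal_add]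
    congr 2
    have hA : 2*π*(1/4 - x/(2*π))*(n:ℝ) = (n:ℝ)*(π/2) - (n:ℝ)*x := by field_simp; ring
    have hB : 2*π*(1/4 + x/(2*π))*(n:ℝ) = (n:ℝ)*(π/2) + (n:ℝ)*x := by field_simp; ring
    rw [hA, hB, Real.sin_sub, Real.sin_add]
    ring_nf
  have hinj : Function.Injective (fun k : ℕ => 2*k+1) := fun a b h => by simp only [] at h; omega
  have hvan : ∀ n ∉ Set.range (fun k : ℕ => 2*k+1),
      ((2 * Real.sin ((n:ℝ)*π/2) * Real.cos ((n:ℝ)*x) : ℝ) : ℂ) / (n:ℂ)^(2*(m:ℂ)) = 0 := by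
    intro n hn
    obtain ⟨j, rfl⟩ : ∃ j, n = 2*j := by
      rcases Nat.even_or_odd n with ⟨j, hj⟩ | ⟨j, hj⟩
      · exact ⟨j, by omega⟩
      · exact absurd ⟨j, show 2*j+1 = n by omega⟩ hn
    have : Real.sin (((2*j:ℕ):ℝ)*π/2) = 0 := by
      rw [show ((2*j:ℕ):ℝ)*π/2 = (j:ℝ)*π by push_cast; ring, Real.sin_nat_mul_pi]
    rw [this]
    simp
  have hodd := (Function.Injective.hasSum_iff hinj hvan).mpr hF
  have := hodd.div_const 2
  refine this.congr_fun fun k => ?_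
  have hs : Real.sin (((2*k+1:ℕ):ℝ)*π/2) = (-1)^k := by
    rw [show ((2*k+1:ℕ):ℝ)*π/2 = (k:ℝ)*π + π/2 by push_cast; ring, Real.sin_add,
      Real.sin_nat_mul_pi, Real.sin_pi_div_two, Real.cos_pi_div_two]
    have : Real.cos ((k:ℝ)*π) = (-1)^k := by simpa using Real.cos_nat_mul_pi_sub 0 k
    rw [this]; ring
  show (-1)^k * (Real.cos ((2*(k:ℝ)+1)*x) : ℂ) / (2*(k:ℂ)+1)^(2*m)
      = ((2 * Real.sin (((2*k+1:ℕ):ℝ)*π/2) * Real.cos (((2*k+1:ℕ):ℝ)*x) : ℝ) : ℂ)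
        / ((2*k+1:ℕ):ℂ)^(2*(m:ℂ)) / 2
  rw [hs, show (2*(m:ℂ)) = ((2*m : ℕ):ℂ) by push_cast; ring, Complex.cpow_natCast]
  push_cast
  ring

lemma final_scalar (m : ℕ) (hm : 0 < m) (S : ℂ) :
    (-1)^(m-1) * (2*(π:ℂ))^(2*m-1) / (2 * ((2*m-1).factorial : ℂ)) *
      ((-1)^m * (π:ℂ) * Complex.I * hfun (2*(m:ℂ)) * (2 * Complex.I * S)) = S / 2 := by
  have hΓ : Complex.Gamma (2*(m:ℂ)) = ((2*m-1).factorial : ℂ) := by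
    rw [show (2*(m:ℂ)) = ((2*m-1:ℕ):ℂ)+1 by exact_mod_cast (by omega : 2*m = (2*m-1)+1),
      Complex.Gamma_nat_eq_factorial]
  have h2pi : (2 * (π:ℂ)) ≠ 0 := by
    simp [Complex.ofReal_ne_zero, Real.pi_ne_zero]
  have hpow : (2*(π:ℂ))^(-(2*(m:ℂ))) = ((2*(π:ℂ))^(2*m-1) * (2*(π:ℂ)))⁻¹ := by
    rw [show -(2*(m:ℂ)) = -(((2*m:ℕ)):ℂ) by push_cast; ring, Complex.cpow_neg,
      Complex.cpow_natCast, ← pow_sub_one_mul (by omega : 2*m ≠ 0) (2*(π:ℂ))]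
  have hm1 : ((-1:ℂ))^m = (-1)^(m-1) * (-1) := by
    rw [← pow_succ, Nat.sub_add_cancel hm]
  have hT : ((-1:ℂ))^(m-1) * ((-1:ℂ))^(m-1) = 1 := by
    rw [← pow_add]
    exact Even.neg_one_pow ⟨m-1, rfl⟩
  have hQ : (2*(π:ℂ))^(2*m-1) ≠ 0 := pow_ne_zero _ h2pi
  have hF : (((2*m-1).factorial : ℕ) : ℂ) ≠ 0 := Nat.cast_ne_zero.mpr (Nat.factorial_ne_zero _)
  simp only [hfun, hΓ, hpow, hm1]
  have hstep : (-1:ℂ)^(m-1) * (2*(π:ℂ))^(2*m-1) / (2 * ((2*m-1).factorial : ℂ)) *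
      ((-1)^(m-1) * (-1) * (π:ℂ) * Complex.I *
        (((2*(π:ℂ))^(2*m-1) * (2*(π:ℂ)))⁻¹ * ((2*m-1).factorial : ℂ)) * (2 * Complex.I * S))
      = ((-1:ℂ)^(m-1) * (-1)^(m-1)) * (Complex.I * Complex.I) * (-1) *
        ((π:ℂ) * (2*(π:ℂ))^(2*m-1) * ((2*m-1).factorial : ℂ) * 2 * S) *
        (2 * ((2*m-1).factorial : ℂ))⁻¹ * ((2*(π:ℂ))^(2*m-1) * (2*(π:ℂ)))⁻¹ := by
    ring
  rw [hstep, hT, Complex.I_mul_I]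
  field_simp

end AltOddCos

theorem alt_odd_cos_series_even_exponent_closed_form (m : ℕ) (hm : 0 < m)
    (x : ℝ) (hx0 : -(π / 2) < x) (hx1 : x < π / 2) :
    Filter.Tendsto
      (fun N : ℕ => ∑ n ∈ Finset.range N,
        (-1) ^ n * (Real.cos ((2 * n + 1) * x) : ℂ) / (2 * (n : ℂ) + 1) ^ (2 * m))
      Filter.atTop
      (𝓝 ((-1) ^ (m - 1) * (2 * (π : ℂ)) ^ (2 * m - 1) / (2 * (Nat.factorial (2 * m - 1) : ℂ)) *
        (deriv (fun s => hzeta s (1 / 4 - x / (2 * π))) (1 - 2 * (m : ℂ)) -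
          deriv (fun s => hzeta s (3 / 4 - x / (2 * π))) (1 - 2 * (m : ℂ)) +
          deriv (fun s => hzeta s (1 / 4 + x / (2 * π))) (1 - 2 * (m : ℂ)) -
          deriv (fun s => hzeta s (3 / 4 + x / (2 * π))) (1 - 2 * (m : ℂ))))) := by
  classical
  open HurwitzZeta AltOddCos in
  have hπ : (0:ℝ) < π := Real.pi_pos
  have htlt : x / (2*π) < 1/4 := by
    rw [div_lt_iff₀ (by positivity)]
    linarith
  have htgt : -(1/4 : ℝ) < x / (2*π) := by
    rw [neg_lt, ← neg_div, div_lt_iff₀ (by positivity)]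
    linarith
  have h1a : (0:ℝ) < 1 / 4 - x / (2 * π) := by linarith
  have h1b : (1 / 4 - x / (2 * π) : ℝ) < 1 := by linarith
  have h2a : (0:ℝ) < 3 / 4 - x / (2 * π) := by linarith
  have h2b : (3 / 4 - x / (2 * π) : ℝ) < 1 := by linarith
  have h3a : (0:ℝ) < 1 / 4 + x / (2 * π) := by linarith
  have h3b : (1 / 4 + x / (2 * π) : ℝ) < 1 := by linarith
  have h4a : (0:ℝ) < 3 / 4 + x / (2 * π) := by linarith
  have h4b : (3 / 4 + x / (2 * π) : ℝ) < 1 := by linarith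
  have hneg1 : -((1 / 4 - x / (2 * π) : ℝ) : UnitAddCircle) = ((3 / 4 + x / (2 * π) : ℝ) : UnitAddCircle) :=
    coe_neg_eq (by ring)
  have hneg2 : -((3 / 4 - x / (2 * π) : ℝ) : UnitAddCircle) = ((1 / 4 + x / (2 * π) : ℝ) : UnitAddCircle) :=
    coe_neg_eq (by ring)
  have hneg3 : -((1 / 4 + x / (2 * π) : ℝ) : UnitAddCircle) = ((3 / 4 - x / (2 * π) : ℝ) : UnitAddCircle) :=
    coe_neg_eq (by ring)
  have hneg4 : -((3 / 4 + x / (2 * π) : ℝ) : UnitAddCircle) = ((1 / 4 - x / (2 * π) : ℝ) : UnitAddCircle) :=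
    coe_neg_eq (by ring)
  rw [hzeta_eq h1a h1b.le, hzeta_eq h2a h2b.le, hzeta_eq h3a h3b.le, hzeta_eq h4a h4b.le]
  have hV : (-1:ℂ) ^ (m - 1) * (2 * (π : ℂ)) ^ (2 * m - 1) / (2 * (Nat.factorial (2 * m - 1) : ℂ)) *
        (deriv (hurwitzZeta ((1 / 4 - x / (2 * π) : ℝ) : UnitAddCircle)) (1 - 2 * (m : ℂ)) -
          deriv (hurwitzZeta ((3 / 4 - x / (2 * π) : ℝ) : UnitAddCircle)) (1 - 2 * (m : ℂ)) +
          deriv (hurwitzZeta ((1 / 4 + x / (2 * π) : ℝ) : UnitAddCircle)) (1 - 2 * (m : ℂ)) -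
          deriv (hurwitzZeta ((3 / 4 + x / (2 * π) : ℝ) : UnitAddCircle)) (1 - 2 * (m : ℂ)))
      = (sinZeta ((1/4 - x/(2*π) : ℝ) : UnitAddCircle) (2*(m:ℂ))
        + sinZeta ((1/4 + x/(2*π) : ℝ) : UnitAddCircle) (2*(m:ℂ)))/2 := by
    rw [Dval _ (coe_ne_zero h1a h1b) m hm, Dval _ (coe_ne_zero h2a h2b) m hm,
      Dval _ (coe_ne_zero h3a h3b) m hm, Dval _ (coe_ne_zero h4a h4b) m hm,
      hneg1, hneg2, hneg3, hneg4,
      ← final_scalar m hm (sinZeta ((1/4 - x/(2*π) : ℝ) : UnitAddCircle) (2*(m:ℂ))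
        + sinZeta ((1/4 + x/(2*π) : ℝ) : UnitAddCircle) (2*(m:ℂ)))]
    simp only [expZeta]
    rw [← hneg3, ← hneg1]
    simp only [cosZeta_neg, sinZeta_neg]
    ring
  rw [hV]
  exact (hassum m hm x).tendsto_sum_nat
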